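/- In any semigroup S, the relations H and ∼ₙ commute: H ∘ ∼ₙ = ∼ₙ ∘ H (as composites of binary relations). -/

import Mathlib

/-- Natural conjugacy on a semigroup `S`. -/
def nconj {S : Type*} [Semigroup S] (a b : S) : Prop :=
  ∃ g h : WithOne S, (a : WithOne S) * g = g * b ∧ (b : WithOne S) * h = h * a ∧
    h * a * g = (b : WithOne S) ∧ g * b * h = (a : WithOne S)

/-- Green's H relation on `S`. -/
def greenH {S : Type*} [Semigroup S] (a b : S) : Prop :=
  (Set.range (fun s : WithOne S => s * a) = Set.range (fun s : WithOne S => s * b)) ∧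
  (Set.range (fun s : WithOne S => (a : WithOne S) * s) =
    Set.range (fun s : WithOne S => (b : WithOne S) * s))

section Aux

variable {S : Type*} [Semigroup S]

private lemma exists_coe_sandwich (x y : WithOne S) (a : S) :
    ∃ d : S, (d : WithOne S) = x * (a : WithOne S) * y := by
  induction x using WithOne.recOneCoe with
  | one =>
    induction y using WithOne.recOneCoe with
    | one => exact ⟨a, by simp⟩
    | coe s => exact ⟨a * s, by simp⟩
  | coe t =>
    induction y using WithOne.recOneCoe with
    | one => exact ⟨t * a, by simp⟩
    | coe s => exact ⟨t * a * s, by simp [mul_assoc]⟩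

private lemma range_left_sub {x y : WithOne S}
    (h : Set.range (fun s : WithOne S => s * x) = Set.range (fun s : WithOne S => s * y)) :
    ∃ u : WithOne S, u * y = x := by
  have hx : x ∈ Set.range (fun s : WithOne S => s * x) := ⟨1, one_mul x⟩
  rw [h] at hx
  exact hx

private lemma range_right_sub {x y : WithOne S}
    (h : Set.range (fun s : WithOne S => x * s) = Set.range (fun s : WithOne S => y * s)) :
    ∃ u : WithOne S, y * u = x := by
  have hx : x ∈ Set.range (fun s : WithOne S => x * s) := ⟨1, mul_one x⟩
  rw [h] at hx
  exact hx

private lemma range_left_eq {x y : WithOne S} (h1 : ∃ u : WithOne S, u * y = x)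
    (h2 : ∃ v : WithOne S, v * x = y) :
    Set.range (fun s : WithOne S => s * x) = Set.range (fun s : WithOne S => s * y) := by
  obtain ⟨u, hu⟩ := h1
  obtain ⟨v, hv⟩ := h2
  ext z
  constructor <;> rintro ⟨s, rfl⟩
  · exact ⟨s * u, by show s * u * y = s * x; rw [mul_assoc, hu]⟩
  · exact ⟨s * v, by show s * v * x = s * y; rw [mul_assoc, hv]⟩

private lemma range_right_eq {x y : WithOne S} (h1 : ∃ u : WithOne S, y * u = x)
    (h2 : ∃ v : WithOne S, x * v = y) :
    Set.range (fun s : WithOne S => x * s) = Set.range (fun s : WithOne S => y * s) := by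
  obtain ⟨u, hu⟩ := h1
  obtain ⟨v, hv⟩ := h2
  ext z
  constructor <;> rintro ⟨s, rfl⟩
  · exact ⟨u * s, by show y * (u * s) = x * s; rw [← mul_assoc, hu]⟩
  · exact ⟨v * s, by show x * (v * s) = y * s; rw [← mul_assoc, hv]⟩

private lemma nconj_symm' {a b : S} (h : nconj a b) : nconj b a := by
  obtain ⟨g, h', h1, h2, h3, h4⟩ := h
  exact ⟨h', g, h2, h1, h4, h3⟩

private lemma greenH_symm' {a b : S} (h : greenH a b) : greenH b a :=
  ⟨h.1.symm, h.2.symm⟩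

private lemma forward {a b : S} (hyp : ∃ c : S, greenH a c ∧ nconj c b) :
    ∃ c : S, nconj a c ∧ greenH c b := by
  obtain ⟨c, ⟨hL, hR⟩, g, w, h1, h2, h3, h4⟩ := hyp
  -- h1 : ↑c * g = g * ↑b,  h2 : ↑b * w = w * ↑c,  h3 : w * ↑c * g = ↑b,  h4 : g * ↑b * w = ↑c
  obtain ⟨u, hu⟩ := range_left_sub hL      -- u * ↑c = ↑a
  obtain ⟨v, hv⟩ := range_left_sub hL.symm -- v * ↑a = ↑c
  obtain ⟨p, hp⟩ := range_right_sub hR      -- ↑c * p = ↑a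
  obtain ⟨q, hq⟩ := range_right_sub hR.symm -- ↑a * q = ↑c
  have eC1 : (c : WithOne S) * (g * w) = (c : WithOne S) := by
    rw [← mul_assoc, h1, h4]
  have eC2 : g * (w * (c : WithOne S)) = (c : WithOne S) := by
    rw [← h2, ← mul_assoc]; exact h4
  have eA1 : (a : WithOne S) * (g * w) = (a : WithOne S) := by
    rw [← hu, mul_assoc, eC1]
  have eA2 : g * (w * (a : WithOne S)) = (a : WithOne S) := by
    rw [← hp, ← mul_assoc w (c : WithOne S) p, ← mul_assoc g (w * (c : WithOne S)) p, eC2]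
  have eB1 : w * (g * (b : WithOne S)) = (b : WithOne S) := by
    rw [← h1, ← mul_assoc]; exact h3
  have eB2 : (b : WithOne S) * (w * g) = (b : WithOne S) := by
    rw [← mul_assoc, h2]; exact h3
  have eA2x : ∀ x : WithOne S, g * (w * ((a : WithOne S) * x)) = (a : WithOne S) * x := by
    intro x
    rw [← mul_assoc w (a : WithOne S) x, ← mul_assoc g (w * (a : WithOne S)) x, eA2]
  have eB1x : ∀ x : WithOne S, w * (g * ((b : WithOne S) * x)) = (b : WithOne S) * x := by
    intro x
    rw [← mul_assoc g (b : WithOne S) x, ← mul_assoc w (g * (b : WithOne S)) x, eB1]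
  obtain ⟨d, hd⟩ := exists_coe_sandwich w g a  -- ↑d = w * ↑a * g
  have n1 : (a : WithOne S) * g = g * (d : WithOne S) := by
    rw [hd]; simp only [mul_assoc]; rw [eA2x]
  have n2 : (d : WithOne S) * w = w * (a : WithOne S) := by
    rw [hd]; simp only [mul_assoc]; rw [eA1]
  have n4 : g * (d : WithOne S) * w = (a : WithOne S) := by
    rw [hd]; simp only [mul_assoc]; rw [eA1]; exact eA2
  have fD1 : w * (g * (d : WithOne S)) = (d : WithOne S) := by
    rw [← n1, ← mul_assoc]; exact hd.symm
  have eD1x : ∀ x : WithOne S, w * (g * ((d : WithOne S) * x)) = (d : WithOne S) * x := by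
    intro x
    rw [← mul_assoc g (d : WithOne S) x, ← mul_assoc w (g * (d : WithOne S)) x, fD1]
  have eD2 : (d : WithOne S) * (w * g) = (d : WithOne S) := by
    rw [← mul_assoc, n2]; exact hd.symm
  refine ⟨d, ⟨g, w, n1, n2, hd.symm, n4⟩, ?_, ?_⟩
  · refine range_left_eq ⟨w * u * g, ?_⟩ ⟨w * v * g, ?_⟩
    · rw [hd, ← hu, ← h4]; simp only [mul_assoc]; rw [eB2]
    · rw [← h3, ← hv, ← n4]; simp only [mul_assoc]; rw [eD2]
  · refine range_right_eq ⟨w * p * g, ?_⟩ ⟨w * q * g, ?_⟩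
    · rw [hd, ← hp, ← h4]; simp only [mul_assoc]; rw [eB1x]
    · rw [← h3, ← hq, ← n4]; simp only [mul_assoc]; rw [eD1x]

end Aux

theorem H_comp_nconj_eq_nconj_comp_H {S : Type*} [Semigroup S] (a b : S) :
    (∃ c : S, greenH a c ∧ nconj c b) ↔ (∃ c : S, nconj a c ∧ greenH c b) := by
  constructor
  · exact forward
  · rintro ⟨c, hn, hH⟩
    obtain ⟨c', hn', hH'⟩ := forward ⟨c, greenH_symm' hH, nconj_symm' hn⟩
    exact ⟨c', greenH_symm' hH', nconj_symm' hn'⟩
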